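/- Define d(R) = T/ℓ − 1/s − C(R,ε)/f_cpu and z(R) = [q_c − (1/(h·f_cpu))·g(1/(d(R)·R))]·ε·e^{εR} − (1/(h·R²))·f′(1/(d(R)·R)), where g(x) = f(x) − x·f′(x) and f′(x) = (N₀·ln 2/B)·2^{x/B}. If d(R) > 0 for all R ∈ [1, R_max], then z is strictly increasing on [1, R_max]. -/

import Mathlib

set_option maxHeartbeats 1000000


open Real Set

/-- The function `z(R)` characterizing the optimal lossless compression ratio
in Problem P1-B is strictly increasing on `[1, R_max]`, provided
`d(R) = T/ℓ − 1/s − C(R,ε)/f_cpu > 0` there.  Here `f(x) = N₀(2^{x/B}−1)`,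
`f′(x) = (N₀ ln 2/B) 2^{x/B}`, `g(x) = f(x) − x f′(x)`, and
`C(R,ε) = e^{εR} − e^{ε}`. -/
theorem z_strictly_increasing
    (N0 B qc h fcpu s T ℓ ε Rmax : ℝ)
    (hN0 : 0 < N0) (hB : 0 < B) (hqc : 0 < qc) (hh : 0 < h)
    (hfcpu : 0 < fcpu) (hs : 0 < s) (hT : 0 < T) (hℓ : 0 < ℓ)
    (hε : 0 < ε) (hRmax : 1 ≤ Rmax)
    (f' g d z : ℝ → ℝ)
    (hf' : ∀ x, f' x = N0 * Real.log 2 / B * (2 : ℝ) ^ (x / B))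
    (hg : ∀ x, g x = N0 * ((2 : ℝ) ^ (x / B) - 1) - x * f' x)
    (hd : ∀ R, d R = T / ℓ - 1 / s - (Real.exp (ε * R) - Real.exp ε) / fcpu)
    (hz : ∀ R, z R =
      (qc - (1 / (h * fcpu)) * g (1 / (d R * R))) * ε * Real.exp (ε * R)
        - (1 / (h * R ^ 2)) * f' (1 / (d R * R)))
    (hdpos : ∀ R ∈ Icc 1 Rmax, 0 < d R) :
    StrictMonoOn z (Icc 1 Rmax) := by
  have hL : 0 < Real.log 2 := Real.log_pos one_lt_two
  simp only [Real.rpow_def_of_pos (by norm_num : (0:ℝ) < 2)] at hf' hg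
  have hdfun : d = fun R => T / ℓ - 1 / s - (Real.exp (ε * R) - Real.exp ε) / fcpu :=
    funext hd
  have hffun : f' = fun x => N0 * Real.log 2 / B * Real.exp (Real.log 2 * (x / B)) :=
    funext hf'
  have hgfun : g = fun x => N0 * (Real.exp (Real.log 2 * (x / B)) - 1) - x * f' x :=
    funext hg
  have hzfun : z = fun R =>
      (qc - (1 / (h * fcpu)) * g (1 / (d R * R))) * ε * Real.exp (ε * R)
        - (1 / (h * R ^ 2)) * f' (1 / (d R * R)) := funext hz
  -- derivative of f'
  have hf'd : ∀ x : ℝ, HasDerivAt f' (f' x * (Real.log 2 / B)) x := by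
    intro x
    rw [hffun]
    have h1 : HasDerivAt (fun x : ℝ => Real.log 2 * (x / B)) (Real.log 2 * (1 / B)) x :=
      ((hasDerivAt_id x).div_const B).const_mul (Real.log 2)
    have h2 := h1.exp.const_mul (N0 * Real.log 2 / B)
    refine h2.congr_deriv ?_
    ring
  -- derivative of g
  have hgd : ∀ x : ℝ, HasDerivAt g (-(x * (f' x * (Real.log 2 / B)))) x := by
    intro x
    have h1 : HasDerivAt (fun x : ℝ => Real.log 2 * (x / B)) (Real.log 2 * (1 / B)) x :=
      ((hasDerivAt_id x).div_const B).const_mul (Real.log 2)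
    have h2 := ((h1.exp.sub_const 1).const_mul N0).sub ((hasDerivAt_id x).mul (hf'd x))
    rw [hgfun]
    refine h2.congr_deriv ?_
    rw [hf' x]
    simp only [id_eq]
    ring
  -- derivative of d
  have hdd : ∀ R : ℝ, HasDerivAt d (-(ε * Real.exp (ε * R)) / fcpu) R := by
    intro R
    have h1 : HasDerivAt (fun R : ℝ => ε * R) (ε * 1) R := (hasDerivAt_id R).const_mul ε
    have h2 := ((h1.exp.sub_const (Real.exp ε)).div_const fcpu).const_sub (T / ℓ - 1 / s)
    rw [hdfun]
    refine h2.congr_deriv ?_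
    ring
  -- positivity of f'
  have hfppos : ∀ x : ℝ, 0 < f' x := by
    intro x; rw [hf' x]; positivity
  -- nonpositivity of g on positives
  have hgle : ∀ x : ℝ, 0 < x → g x ≤ 0 := by
    intro x hx
    rw [hg x, hf' x]
    set t := Real.log 2 * (x / B) with ht
    have ht0 : 0 ≤ t := mul_nonneg hL.le (div_nonneg hx.le hB.le)
    have h1 : 1 - t ≤ Real.exp (-t) := by
      have := Real.add_one_le_exp (-t); linarith
    have h2 : (1 - t) * Real.exp t ≤ 1 := by
      have h3 := mul_le_mul_of_nonneg_right h1 (Real.exp_pos t).le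
      rwa [← Real.exp_add, neg_add_cancel, Real.exp_zero] at h3
    have hxt : x * (N0 * Real.log 2 / B * Real.exp t) = N0 * (t * Real.exp t) := by
      rw [ht]; ring
    nlinarith [Real.exp_pos t, mul_le_mul_of_nonneg_left h2 hN0.le]
  -- main derivative computation on the interior
  have key : ∀ R ∈ Ioo (1:ℝ) Rmax,
      HasDerivAt z
        (ε ^ 2 * Real.exp (ε * R) * (qc - g (1 / (d R * R)) / (h * fcpu))
          + 2 * f' (1 / (d R * R)) / (h * R ^ 3)
          + (ε * Real.exp (ε * R) * R / fcpu - d R) ^ 2 * (1 / (d R * R)) ^ 3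
              * (f' (1 / (d R * R)) * (Real.log 2 / B)) / (h * R)) R := by
    intro R hR
    have hR0 : (0:ℝ) < R := lt_trans one_pos hR.1
    have hD : 0 < d R := hdpos R ⟨hR.1.le, hR.2.le⟩
    have hP : 0 < d R * R := mul_pos hD hR0
    have hw : HasDerivAt (fun R => d R * R)
        (-(ε * Real.exp (ε * R)) / fcpu * R + d R * 1) R :=
      (hdd R).mul (hasDerivAt_id R)
    have hu : HasDerivAt (fun R => 1 / (d R * R))
        ((ε * Real.exp (ε * R) / fcpu * R - d R) / (d R * R) ^ 2) R := by
      have h2 := hw.inv hP.ne'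
      simp only [one_div]
      refine h2.congr_deriv ?_
      field_simp
      ring
    have hgc := (hgd (1 / (d R * R))).comp R hu
    have hfc := (hf'd (1 / (d R * R))).comp R hu
    have hE : HasDerivAt (fun R : ℝ => Real.exp (ε * R)) (Real.exp (ε * R) * (ε * 1)) R :=
      ((hasDerivAt_id R).const_mul ε).exp
    have hq : HasDerivAt (fun R : ℝ => 1 / (h * R ^ 2))
        (-(h * (2 * R)) / (h * R ^ 2) ^ 2) R := by
      have h1 : HasDerivAt (fun R : ℝ => h * R ^ 2) (h * (↑2 * R ^ 1)) R :=
        (hasDerivAt_pow 2 R).const_mul h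
      have h2 := h1.inv (by positivity : h * R ^ 2 ≠ 0)
      simp only [one_div]
      refine h2.congr_deriv ?_
      norm_num
    have hraw := ((((hgc.const_mul (1 / (h * fcpu))).const_sub qc).mul_const ε).mul hE).sub
      (hq.mul hfc)
    rw [hzfun]
    refine hraw.congr_deriv ?_
    have hne1 : d R * R ≠ 0 := hP.ne'
    have hne2 : R ≠ 0 := hR0.ne'
    simp only [Function.comp_apply]
    field_simp
    ring
  -- continuity
  have cd : Continuous d := by rw [hdfun]; fun_prop
  have cf : Continuous f' := by rw [hffun]; fun_prop
  have cg : Continuous g := by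
    rw [hgfun]
    exact (Continuous.sub (by fun_prop) (continuous_id.mul cf))
  have cu : ContinuousOn (fun R => 1 / (d R * R)) (Icc 1 Rmax) :=
    ContinuousOn.div continuousOn_const (cd.continuousOn.mul continuousOn_id)
      (fun x hx => (mul_pos (hdpos x hx) (lt_of_lt_of_le one_pos hx.1)).ne')
  have hcont : ContinuousOn z (Icc 1 Rmax) := by
    rw [hzfun]
    apply ContinuousOn.sub
    · exact ((continuousOn_const.sub
        (continuousOn_const.mul (cg.comp_continuousOn cu))).mul continuousOn_const).mul
        (Continuous.continuousOn (by fun_prop))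
    · exact (ContinuousOn.div continuousOn_const
        (Continuous.continuousOn (by fun_prop))
        (fun x hx => by
          have : (0:ℝ) < x := lt_of_lt_of_le one_pos hx.1
          positivity)).mul (cf.comp_continuousOn cu)
  apply strictMonoOn_of_deriv_pos (convex_Icc 1 Rmax) hcont
  intro R hR
  rw [interior_Icc] at hR
  rw [(key R hR).deriv]
  have hR0 : (0:ℝ) < R := lt_trans one_pos hR.1
  have hD : 0 < d R := hdpos R ⟨hR.1.le, hR.2.le⟩
  have hP : 0 < d R * R := mul_pos hD hR0
  have hu0 : 0 < 1 / (d R * R) := by positivity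
  have hg0 : g (1 / (d R * R)) ≤ 0 := hgle _ hu0
  have hf0 : 0 < f' (1 / (d R * R)) := hfppos _
  have hA : 0 < qc - g (1 / (d R * R)) / (h * fcpu) := by
    have : g (1 / (d R * R)) / (h * fcpu) ≤ 0 :=
      div_nonpos_of_nonpos_of_nonneg hg0 (by positivity)
    linarith
  have t1 : 0 < ε ^ 2 * Real.exp (ε * R) * (qc - g (1 / (d R * R)) / (h * fcpu)) := by
    have := Real.exp_pos (ε * R); positivity
  have t2 : 0 < 2 * f' (1 / (d R * R)) / (h * R ^ 3) := by positivity
  have t3 : 0 ≤ (ε * Real.exp (ε * R) * R / fcpu - d R) ^ 2 * (1 / (d R * R)) ^ 3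
      * (f' (1 / (d R * R)) * (Real.log 2 / B)) / (h * R) := by positivity
  linarith
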